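/- Let (X, μ) be a finite nonzero measure space, n a positive integer, p a real number with p > 1, and f, s, h : X → ℝ bounded measurable functions. Define C(t) = ( ∫_X e^{(n−p)·t·f}·|s − n·t·h|^p dμ ) · ( ∫_X e^{n·t·f} dμ )^{−(n−p)/n}. Then C is differentiable at 0 with C′(0) = ( ∫_X F dμ ) · ( μ(X) )^{−(n−p)/n}, where F = (n−p)·f·( |s|^p − (1/μ(X))·∫_X |s|^p dμ ) − n·p·h·s·|s|^{p−2}. -/

import Mathlib

open MeasureTheory Real

private lemma meas_abs_rpow {X : Type*} [MeasurableSpace X] {s : X → ℝ} (hs : Measurable s)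
    (q : ℝ) : Measurable fun x => |s x| ^ q := by
  have : (fun x => |s x| ^ q)
      = fun x => if s x = 0 then (0:ℝ) ^ q else Real.exp (Real.log |s x| * q) := by
    funext x
    by_cases hx : s x = 0
    · simp [hx]
    · rw [if_neg hx, Real.rpow_def_of_pos (abs_pos.mpr hx)]
  rw [this]
  exact Measurable.ite (hs (measurableSet_singleton 0)) measurable_const
    ((hs.abs.log.mul_const q).exp)

private lemma abs_mul_abs_rpow_le {y K p : ℝ} (hp : 1 < p) (hK : 0 ≤ K) (hy : |y| ≤ K) :
    |y * |y| ^ (p - 2)| ≤ K ^ (p - 1) := by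
  rcases eq_or_ne y 0 with rfl | hy0
  · simpa using Real.rpow_nonneg hK (p - 1)
  · have h0 : (0:ℝ) < |y| := abs_pos.mpr hy0
    have e : |y| ^ (p - 1) = |y| * |y| ^ (p - 2) := by
      rw [show p - 1 = 1 + (p - 2) by ring, Real.rpow_add h0, Real.rpow_one]
    calc |y * |y| ^ (p - 2)| = |y| * |y| ^ (p - 2) := by
          rw [abs_mul, abs_of_nonneg (Real.rpow_nonneg (abs_nonneg y) _)]
      _ = |y| ^ (p - 1) := e.symm
      _ ≤ K ^ (p - 1) := Real.rpow_le_rpow (abs_nonneg y) hy (by linarith)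

private lemma integrable_of_bdd {X : Type*} [MeasurableSpace X] {μ : Measure X}
    [IsFiniteMeasure μ] {g : X → ℝ} (hg : AEStronglyMeasurable g μ) {K : ℝ}
    (hK : ∀ x, |g x| ≤ K) : Integrable g μ :=
  (integrable_const K).mono' hg (Filter.Eventually.of_forall fun x => by
    simpa [Real.norm_eq_abs] using hK x)

/-- first variation of the p-Calabi functional at the base metric:
`C′(0) = (∫ F dμ) · μ(X)^{-(n-p)/n}` with
`F = (n-p)·f·(|s|^p − ⨍|s|^p) − n·p·h·s·|s|^{p-2}`. -/
theorem stmt3 {X : Type*} [MeasurableSpace X] (μ : Measure X) [IsFiniteMeasure μ]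
    (hμ : μ Set.univ ≠ 0)
    (n : ℕ) (hn : 0 < n) (p : ℝ) (hp : 1 < p)
    (f s h : X → ℝ) (hf : Measurable f) (hs : Measurable s) (hh : Measurable h)
    (C : ℝ) (hfb : ∀ x, |f x| ≤ C) (hsb : ∀ x, |s x| ≤ C) (hhb : ∀ x, |h x| ≤ C) :
    HasDerivAt
      (fun t : ℝ =>
        (∫ x, Real.exp (((n : ℝ) - p) * t * f x) * |s x - (n : ℝ) * t * h x| ^ p ∂μ) *
          (∫ x, Real.exp ((n : ℝ) * t * f x) ∂μ) ^ (-(((n : ℝ) - p) / n)))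
      ((∫ x, ((n : ℝ) - p) * f x *
            (|s x| ^ p - ((μ Set.univ).toReal)⁻¹ * ∫ y, |s y| ^ p ∂μ)
          - (n : ℝ) * p * h x * (s x * |s x| ^ (p - 2)) ∂μ) *
        ((μ Set.univ).toReal) ^ (-(((n : ℝ) - p) / n)))
      0 := by
  have hn0 : ((n:ℝ)) ≠ 0 := Nat.cast_ne_zero.mpr hn.ne'
  have hnn : (0:ℝ) ≤ (n:ℝ) := Nat.cast_nonneg n
  have hXne : Nonempty X := by
    by_contra hne
    rw [not_nonempty_iff] at hne
    refine hμ ?_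
    rw [Set.univ_eq_empty_iff.mpr hne]
    exact measure_empty
  have hC : 0 ≤ C := le_trans (abs_nonneg _) (hfb (Classical.arbitrary X))
  set M := (μ Set.univ).toReal with hMdef
  have hM : 0 < M := ENNReal.toReal_pos hμ (measure_ne_top μ _)
  have hp0 : (0:ℝ) < p := lt_trans one_pos hp
  set K := (1 + (n:ℝ)) * C with hKdef
  have hK0 : 0 ≤ K := by positivity
  set E := Real.exp (|(n:ℝ) - p| * C) with hEdef
  have hE0 : 0 ≤ E := (Real.exp_pos _).le
  set EB := Real.exp ((n:ℝ) * C) with hEBdef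
  -- integrable pieces
  have i_fsp : Integrable (fun x => f x * |s x| ^ p) μ := by
    refine integrable_of_bdd ((hf.mul (meas_abs_rpow hs p)).aestronglyMeasurable)
      (K := C * C ^ p) fun x => ?_
    rw [abs_mul, abs_of_nonneg (Real.rpow_nonneg (abs_nonneg _) _)]
    exact mul_le_mul (hfb x) (Real.rpow_le_rpow (abs_nonneg _) (hsb x) hp0.le)
      (Real.rpow_nonneg (abs_nonneg _) _) hC
  have i_hss : Integrable (fun x => h x * (s x * |s x| ^ (p - 2))) μ := by
    refine integrable_of_bdd ((hh.mul (hs.mul (meas_abs_rpow hs (p - 2)))).aestronglyMeasurable)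
      (K := C * C ^ (p - 1)) fun x => ?_
    rw [abs_mul]
    exact mul_le_mul (hhb x) (abs_mul_abs_rpow_le hp hC (hsb x)) (abs_nonneg _) hC
  have i_f : Integrable f μ := integrable_of_bdd hf.aestronglyMeasurable hfb
  have i_sp : Integrable (fun x => |s x| ^ p) μ := by
    refine integrable_of_bdd ((meas_abs_rpow hs p).aestronglyMeasurable) (K := C ^ p) fun x => ?_
    rw [abs_of_nonneg (Real.rpow_nonneg (abs_nonneg _) _)]
    exact Real.rpow_le_rpow (abs_nonneg _) (hsb x) hp0.le
  -- abbreviations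
  set J := ∫ x, |s x| ^ p ∂μ with hJdef
  set I1 := ∫ x, f x * |s x| ^ p ∂μ with hI1def
  set I2 := ∫ x, h x * (s x * |s x| ^ (p - 2)) ∂μ with hI2def
  set I3 := ∫ x, f x ∂μ with hI3def
  -- uniform bounds on |t| ≤ 1
  have hexpB : ∀ t : ℝ, |t| ≤ 1 → ∀ x, Real.exp (((n:ℝ) - p) * t * f x) ≤ E := by
    intro t ht x
    apply Real.exp_le_exp.mpr
    calc ((n:ℝ) - p) * t * f x ≤ |((n:ℝ) - p) * t * f x| := le_abs_self _
      _ = |(n:ℝ) - p| * |t| * |f x| := by rw [abs_mul, abs_mul]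
      _ ≤ |(n:ℝ) - p| * 1 * C := by gcongr <;> first | exact ht | exact hfb x
      _ = |(n:ℝ) - p| * C := by ring
  have hyB : ∀ t : ℝ, |t| ≤ 1 → ∀ x, |s x - (n:ℝ) * t * h x| ≤ K := by
    intro t ht x
    calc |s x - (n:ℝ) * t * h x| ≤ |s x| + |(n:ℝ) * t * h x| := abs_sub _ _
      _ = |s x| + (n:ℝ) * |t| * |h x| := by rw [abs_mul, abs_mul, Nat.abs_cast]
      _ ≤ C + (n:ℝ) * 1 * C := by gcongr <;> first | exact hsb x | exact ht | exact hhb x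
      _ = K := by rw [hKdef]; ring
  -- derivative of the first integral
  set Bd1 := E * (|(n:ℝ) - p| * C) * K ^ p + E * ((p * K ^ (p - 1)) * ((n:ℝ) * C)) with hBd1def
  have hderivA : ∀ (t : ℝ) (x : X),
      HasDerivAt (fun t : ℝ => Real.exp (((n:ℝ) - p) * t * f x) * |s x - (n:ℝ) * t * h x| ^ p)
        (Real.exp (((n:ℝ) - p) * t * f x) * (((n:ℝ) - p) * f x) * |s x - (n:ℝ) * t * h x| ^ p
          + Real.exp (((n:ℝ) - p) * t * f x) *
            ((p * |s x - (n:ℝ) * t * h x| ^ (p - 2) * (s x - (n:ℝ) * t * h x))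
              * (-((n:ℝ) * h x)))) t := by
    intro t x
    have h1 : HasDerivAt (fun t : ℝ => ((n:ℝ) - p) * t * f x) (((n:ℝ) - p) * f x) t := by
      simpa using ((hasDerivAt_id t).const_mul ((n:ℝ) - p)).mul_const (f x)
    have h2 : HasDerivAt (fun t : ℝ => s x - (n:ℝ) * t * h x) (-((n:ℝ) * h x)) t := by
      simpa using (((hasDerivAt_id t).const_mul (n:ℝ)).mul_const (h x)).const_sub (s x)
    have h3 := (hasDerivAt_abs_rpow (s x - (n:ℝ) * t * h x) hp).comp t h2
    exact h1.exp.mul h3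
  have hmeasA : ∀ t : ℝ, Measurable fun x =>
      Real.exp (((n:ℝ) - p) * t * f x) * (((n:ℝ) - p) * f x) * |s x - (n:ℝ) * t * h x| ^ p
        + Real.exp (((n:ℝ) - p) * t * f x) *
          ((p * |s x - (n:ℝ) * t * h x| ^ (p - 2) * (s x - (n:ℝ) * t * h x))
            * (-((n:ℝ) * h x))) := by
    intro t
    have m1 : Measurable fun x => Real.exp (((n:ℝ) - p) * t * f x) := by
      have : Measurable fun x => ((n:ℝ) - p) * t * f x := by
        simpa [mul_assoc] using hf.const_mul (((n:ℝ) - p) * t)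
      exact this.exp
    have m2 : Measurable fun x => s x - (n:ℝ) * t * h x := by
      have : Measurable fun x => (n:ℝ) * t * h x := by
        simpa [mul_assoc] using hh.const_mul ((n:ℝ) * t)
      exact hs.sub this
    have m3 := meas_abs_rpow m2 p
    have m4 := meas_abs_rpow m2 (p - 2)
    exact ((m1.mul (hf.const_mul _)).mul m3).add
      (m1.mul (((m4.const_mul p).mul m2).mul ((hh.const_mul _).neg)))
  have hboundA : ∀ t : ℝ, |t| ≤ 1 → ∀ x,
      |Real.exp (((n:ℝ) - p) * t * f x) * (((n:ℝ) - p) * f x) * |s x - (n:ℝ) * t * h x| ^ p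
        + Real.exp (((n:ℝ) - p) * t * f x) *
          ((p * |s x - (n:ℝ) * t * h x| ^ (p - 2) * (s x - (n:ℝ) * t * h x))
            * (-((n:ℝ) * h x)))| ≤ Bd1 := by
    intro t ht x
    set y := s x - (n:ℝ) * t * h x with hydef
    have e0 : (0:ℝ) ≤ Real.exp (((n:ℝ) - p) * t * f x) := (Real.exp_pos _).le
    have e1 := hexpB t ht x
    have y1 := hyB t ht x
    have yp : |y| ^ p ≤ K ^ p := Real.rpow_le_rpow (abs_nonneg _) y1 hp0.le
    have ypm : |y * |y| ^ (p - 2)| ≤ K ^ (p - 1) := abs_mul_abs_rpow_le hp hK0 y1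
    have habs2 : |p * |y| ^ (p - 2) * y| = p * |y * |y| ^ (p - 2)| := by
      rw [abs_mul, abs_mul, abs_mul, abs_of_nonneg hp0.le,
        abs_of_nonneg (Real.rpow_nonneg (abs_nonneg _) _)]
      ring
    have hb1 : |Real.exp (((n:ℝ) - p) * t * f x) * (((n:ℝ) - p) * f x) * |y| ^ p|
        ≤ E * (|(n:ℝ) - p| * C) * K ^ p := by
      rw [abs_mul, abs_mul, abs_of_nonneg e0,
        abs_of_nonneg (Real.rpow_nonneg (abs_nonneg y) p), abs_mul]
      gcongr <;> first | exact e1 | exact hfb x | exact yp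
    have hb2 : |Real.exp (((n:ℝ) - p) * t * f x) *
          ((p * |y| ^ (p - 2) * y) * (-((n:ℝ) * h x)))|
        ≤ E * ((p * K ^ (p - 1)) * ((n:ℝ) * C)) := by
      have hyp2 : |y| * |y| ^ (p - 2) ≤ K ^ (p - 1) := by
        have e3 : |y * |y| ^ (p - 2)| = |y| * |y| ^ (p - 2) := by
          rw [abs_mul, abs_of_nonneg (Real.rpow_nonneg (abs_nonneg y) _)]
        rw [← e3]; exact ypm
      have e2 : |Real.exp (((n:ℝ) - p) * t * f x) *
            ((p * |y| ^ (p - 2) * y) * (-((n:ℝ) * h x)))|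
          = Real.exp (((n:ℝ) - p) * t * f x) *
            ((p * (|y| * |y| ^ (p - 2))) * ((n:ℝ) * |h x|)) := by
        simp only [abs_mul, abs_neg, Nat.abs_cast, abs_of_nonneg e0, abs_of_nonneg hp0.le,
          abs_of_nonneg (Real.rpow_nonneg (abs_nonneg y) (p - 2))]
        ring
      rw [e2]
      gcongr <;> first | exact e1 | exact hyp2 | exact hhb x
    calc _ ≤ |Real.exp (((n:ℝ) - p) * t * f x) * (((n:ℝ) - p) * f x) * |y| ^ p|
          + |Real.exp (((n:ℝ) - p) * t * f x) *
              ((p * |y| ^ (p - 2) * y) * (-((n:ℝ) * h x)))| := abs_add_le _ _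
      _ ≤ E * (|(n:ℝ) - p| * C) * K ^ p + E * ((p * K ^ (p - 1)) * ((n:ℝ) * C)) :=
          add_le_add hb1 hb2
      _ = Bd1 := by rw [hBd1def]
  have hA := (hasDerivAt_integral_of_dominated_loc_of_deriv_le
      (F := fun t x => Real.exp (((n:ℝ) - p) * t * f x) * |s x - (n:ℝ) * t * h x| ^ p)
      (F' := fun t x =>
        Real.exp (((n:ℝ) - p) * t * f x) * (((n:ℝ) - p) * f x) * |s x - (n:ℝ) * t * h x| ^ p
          + Real.exp (((n:ℝ) - p) * t * f x) *
            ((p * |s x - (n:ℝ) * t * h x| ^ (p - 2) * (s x - (n:ℝ) * t * h x))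
              * (-((n:ℝ) * h x))))
      (x₀ := (0:ℝ)) (bound := fun _ => Bd1) (s := Metric.ball (0:ℝ) 1) (μ := μ) (Metric.ball_mem_nhds _ one_pos)
      (Filter.Eventually.of_forall fun t => by
        have m1 : Measurable fun x => Real.exp (((n:ℝ) - p) * t * f x) := by
          have : Measurable fun x => ((n:ℝ) - p) * t * f x := by
            simpa [mul_assoc] using hf.const_mul (((n:ℝ) - p) * t)
          exact this.exp
        have m2 : Measurable fun x => s x - (n:ℝ) * t * h x := by
          have : Measurable fun x => (n:ℝ) * t * h x := by
            simpa [mul_assoc] using hh.const_mul ((n:ℝ) * t)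
          exact hs.sub this
        exact (m1.mul (meas_abs_rpow m2 p)).aestronglyMeasurable)
      (by
        refine integrable_of_bdd ?_ (K := E * K ^ p) fun x => ?_
        · have m1 : Measurable fun x => Real.exp (((n:ℝ) - p) * 0 * f x) := by
            have : Measurable fun x => ((n:ℝ) - p) * 0 * f x := by
              simpa [mul_assoc] using hf.const_mul (((n:ℝ) - p) * 0)
            exact this.exp
          have m2 : Measurable fun x => s x - (n:ℝ) * 0 * h x := by
            have : Measurable fun x => (n:ℝ) * 0 * h x := by
              simpa [mul_assoc] using hh.const_mul ((n:ℝ) * 0)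
            exact hs.sub this
          exact (m1.mul (meas_abs_rpow m2 p)).aestronglyMeasurable
        · rw [abs_mul, abs_of_nonneg (Real.exp_pos _).le,
            abs_of_nonneg (Real.rpow_nonneg (abs_nonneg _) _)]
          exact mul_le_mul (hexpB 0 (by simp) x)
            (Real.rpow_le_rpow (abs_nonneg _) (hyB 0 (by simp) x) hp0.le)
            (Real.rpow_nonneg (abs_nonneg _) _) hE0)
      ((hmeasA 0).aestronglyMeasurable)
      (Filter.Eventually.of_forall fun x t htb => by
        have ht : |t| ≤ 1 := by
          simpa [Real.norm_eq_abs] using (mem_ball_zero_iff.mp htb).le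
        simpa [Real.norm_eq_abs] using hboundA t ht x)
      (integrable_const _)
      (Filter.Eventually.of_forall fun x t _ => hderivA t x)).2
  -- derivative of the second integral
  have hderivB : ∀ (t : ℝ) (x : X),
      HasDerivAt (fun t : ℝ => Real.exp ((n:ℝ) * t * f x))
        (Real.exp ((n:ℝ) * t * f x) * ((n:ℝ) * f x)) t := by
    intro t x
    have h1 : HasDerivAt (fun t : ℝ => (n:ℝ) * t * f x) ((n:ℝ) * f x) t := by
      simpa using ((hasDerivAt_id t).const_mul (n:ℝ)).mul_const (f x)
    exact h1.exp
  have hexpB2 : ∀ t : ℝ, |t| ≤ 1 → ∀ x, Real.exp ((n:ℝ) * t * f x) ≤ EB := by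
    intro t ht x
    apply Real.exp_le_exp.mpr
    calc (n:ℝ) * t * f x ≤ |(n:ℝ) * t * f x| := le_abs_self _
      _ = (n:ℝ) * |t| * |f x| := by rw [abs_mul, abs_mul, Nat.abs_cast]
      _ ≤ (n:ℝ) * 1 * C := by gcongr <;> first | exact ht | exact hfb x
      _ = (n:ℝ) * C := by ring
  have hB := (hasDerivAt_integral_of_dominated_loc_of_deriv_le
      (F := fun t x => Real.exp ((n:ℝ) * t * f x))
      (F' := fun t x => Real.exp ((n:ℝ) * t * f x) * ((n:ℝ) * f x))
      (x₀ := (0:ℝ)) (bound := fun _ => EB * ((n:ℝ) * C)) (s := Metric.ball (0:ℝ) 1) (μ := μ) (Metric.ball_mem_nhds _ one_pos)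
      (Filter.Eventually.of_forall fun t => by
        have : Measurable fun x => (n:ℝ) * t * f x := by
          simpa [mul_assoc] using hf.const_mul ((n:ℝ) * t)
        exact this.exp.aestronglyMeasurable)
      (by
        refine integrable_of_bdd ?_ (K := EB) fun x => ?_
        · have : Measurable fun x => (n:ℝ) * 0 * f x := by
            simpa [mul_assoc] using hf.const_mul ((n:ℝ) * 0)
          exact this.exp.aestronglyMeasurable
        · rw [abs_of_nonneg (Real.exp_pos _).le]
          exact hexpB2 0 (by simp) x)
      (by
        have m : Measurable fun x => (n:ℝ) * 0 * f x := by
          simpa [mul_assoc] using hf.const_mul ((n:ℝ) * 0)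
        exact (m.exp.mul (hf.const_mul _)).aestronglyMeasurable)
      (Filter.Eventually.of_forall fun x t htb => by
        have ht : |t| ≤ 1 := by
          simpa [Real.norm_eq_abs] using (mem_ball_zero_iff.mp htb).le
        have hEB0 : (0:ℝ) ≤ EB := by rw [hEBdef]; positivity
        rw [Real.norm_eq_abs, abs_mul, abs_mul, Nat.abs_cast,
          abs_of_nonneg (Real.exp_pos _).le]
        exact mul_le_mul (hexpB2 t ht x)
          (by gcongr; exact hfb x) (by positivity) hEB0)
      (integrable_const _)
      (Filter.Eventually.of_forall fun x t _ => hderivB t x)).2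
  -- value of the second integral at 0
  have hB0 : (∫ x, Real.exp ((n:ℝ) * 0 * f x) ∂μ) = M := by
    simp only [mul_zero, zero_mul, Real.exp_zero]
    rw [integral_const, smul_eq_mul, mul_one, Measure.real, ← hMdef]
  have hBpow := hB.rpow_const (p := -(((n:ℝ) - p) / n)) (Or.inl (by rw [hB0]; exact hM.ne'))
  have hfull := hA.mul hBpow
  convert hfull using 1
  case e'_4 => rfl
  case e'_5 => rfl
  case e'_8 => rfl
  -- compute the values
  have hA0 : (∫ x, Real.exp (((n:ℝ) - p) * 0 * f x) * |s x - (n:ℝ) * 0 * h x| ^ p ∂μ) = J := by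
    simp only [mul_zero, zero_mul, Real.exp_zero, one_mul, sub_zero, hJdef]
  have hDA : (∫ x,
      Real.exp (((n:ℝ) - p) * 0 * f x) * (((n:ℝ) - p) * f x) * |s x - (n:ℝ) * 0 * h x| ^ p
        + Real.exp (((n:ℝ) - p) * 0 * f x) *
          ((p * |s x - (n:ℝ) * 0 * h x| ^ (p - 2) * (s x - (n:ℝ) * 0 * h x))
            * (-((n:ℝ) * h x))) ∂μ)
      = ((n:ℝ) - p) * I1 - ((n:ℝ) * p) * I2 := by
    have : (fun x =>
        Real.exp (((n:ℝ) - p) * 0 * f x) * (((n:ℝ) - p) * f x) * |s x - (n:ℝ) * 0 * h x| ^ p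
          + Real.exp (((n:ℝ) - p) * 0 * f x) *
            ((p * |s x - (n:ℝ) * 0 * h x| ^ (p - 2) * (s x - (n:ℝ) * 0 * h x))
              * (-((n:ℝ) * h x))))
        = fun x => ((n:ℝ) - p) * (f x * |s x| ^ p)
            - ((n:ℝ) * p) * (h x * (s x * |s x| ^ (p - 2))) := by
      funext x
      simp only [mul_zero, zero_mul, Real.exp_zero, one_mul, sub_zero]
      ring
    have j1 : Integrable (fun x => ((n:ℝ) - p) * (f x * |s x| ^ p)) μ := i_fsp.const_mul _
    have j2 : Integrable (fun x => ((n:ℝ) * p) * (h x * (s x * |s x| ^ (p - 2)))) μ :=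
      i_hss.const_mul _
    rw [this, integral_sub j1 j2, integral_const_mul, integral_const_mul, hI1def, hI2def]
  have hDB : (∫ x, Real.exp ((n:ℝ) * 0 * f x) * ((n:ℝ) * f x) ∂μ) = (n:ℝ) * I3 := by
    have : (fun x => Real.exp ((n:ℝ) * 0 * f x) * ((n:ℝ) * f x)) = fun x => (n:ℝ) * f x := by
      funext x
      simp only [mul_zero, zero_mul, Real.exp_zero, one_mul]
    rw [this, integral_const_mul, hI3def]
  have eq1 : (∫ x, ((n:ℝ) - p) * f x * (|s x| ^ p - M⁻¹ * J)
        - (n:ℝ) * p * h x * (s x * |s x| ^ (p - 2)) ∂μ)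
      = ((n:ℝ) - p) * I1 - (((n:ℝ) - p) * (M⁻¹ * J)) * I3 - ((n:ℝ) * p) * I2 := by
    have : (fun x => ((n:ℝ) - p) * f x * (|s x| ^ p - M⁻¹ * J)
          - (n:ℝ) * p * h x * (s x * |s x| ^ (p - 2)))
        = fun x => (((n:ℝ) - p) * (f x * |s x| ^ p) - (((n:ℝ) - p) * (M⁻¹ * J)) * f x)
            - ((n:ℝ) * p) * (h x * (s x * |s x| ^ (p - 2))) := by
      funext x; ring
    have j1 : Integrable (fun x => ((n:ℝ) - p) * (f x * |s x| ^ p)) μ := i_fsp.const_mul _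
    have j2 : Integrable (fun x => (((n:ℝ) - p) * (M⁻¹ * J)) * f x) μ := i_f.const_mul _
    have j3 : Integrable (fun x => ((n:ℝ) * p) * (h x * (s x * |s x| ^ (p - 2)))) μ :=
      i_hss.const_mul _
    have j12 : Integrable (fun x => ((n:ℝ) - p) * (f x * |s x| ^ p)
        - (((n:ℝ) - p) * (M⁻¹ * J)) * f x) μ := j1.sub j2
    rw [this, integral_sub j12 j3, integral_sub j1 j2,
      integral_const_mul, integral_const_mul, integral_const_mul, hI1def, hI2def, hI3def]
  rw [eq1, hA0, hDA, hDB, hB0, Real.rpow_sub hM, Real.rpow_one]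
  field_simp
  ring
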